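/- The three real solutions β₀ < −ρ < α < 0 < Φ(q) of ψ(λ) = q satisfy the residue identity 1/(Φ(q)·ψ'(Φ(q))) + 1/(α·ψ'(α)) + 1/(β₀·ψ'(β₀)) = 1/q. -/

import Mathlib

open Real Set

set_option maxHeartbeats 1600000 in
/-- The three real solutions β₀ < −ρ < α < 0 < Φ(q) of ψ(λ) = q
(all nonzero, with ψ' nonzero at each of them) satisfy the residue identity
1/(Φ(q)ψ'(Φ(q))) + 1/(αψ'(α)) + 1/(β₀ψ'(β₀)) = 1/q. -/
theorem stmt_9 (σ μ a ρ q β₀ α Φq : ℝ) (ψ : ℝ → ℝ)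
    (hσ : 0 < σ) (hμ : 0 ≤ μ) (ha : 0 < a) (hρ : 0 < ρ) (hq : 0 < q)
    (hψ : ∀ lam : ℝ, ψ lam = σ ^ 2 / 2 * lam ^ 2 + μ * lam - a * lam / (ρ + lam))
    (hβρ : β₀ < -ρ) (hρα : -ρ < α) (hα0 : α < 0) (hΦ : 0 < Φq)
    (hrβ : ψ β₀ = q) (hrα : ψ α = q) (hrΦ : ψ Φq = q)
    (hdβ : deriv ψ β₀ ≠ 0) (hdα : deriv ψ α ≠ 0) (hdΦ : deriv ψ Φq ≠ 0) :
    1 / (Φq * deriv ψ Φq) + 1 / (α * deriv ψ α) + 1 / (β₀ * deriv ψ β₀) = 1 / q := by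
  have hβρ' : ρ + β₀ ≠ 0 := by nlinarith
  have hαρ' : ρ + α ≠ 0 := by nlinarith
  have hΦρ' : ρ + Φq ≠ 0 := by nlinarith
  have hβ0 : β₀ ≠ 0 := by nlinarith
  have hα0' : α ≠ 0 := ne_of_lt hα0
  have hΦ0 : Φq ≠ 0 := ne_of_gt hΦ
  have hβα : α - β₀ ≠ 0 := by nlinarith
  have hβΦ : Φq - β₀ ≠ 0 := by nlinarith
  have hαΦ : Φq - α ≠ 0 := by nlinarith
  have hq0 : q ≠ 0 := ne_of_gt hq
  have hψfun : ψ = fun lam => σ ^ 2 / 2 * lam ^ 2 + μ * lam - a * lam / (ρ + lam) :=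
    funext hψ
  have hder : ∀ x : ℝ, ρ + x ≠ 0 →
      deriv ψ x = σ ^ 2 * x + μ - a * ρ / (ρ + x) ^ 2 := by
    intro x hx
    have h1 : HasDerivAt (fun l : ℝ => σ ^ 2 / 2 * l ^ 2) (σ ^ 2 / 2 * (2 * x)) x := by
      simpa using ((hasDerivAt_pow 2 x).const_mul (σ ^ 2 / 2))
    have h2 : HasDerivAt (fun l : ℝ => μ * l) μ x := by
      simpa using (hasDerivAt_id x).const_mul μ
    have hnum : HasDerivAt (fun l : ℝ => a * l) a x := by
      simpa using (hasDerivAt_id x).const_mul a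
    have hden : HasDerivAt (fun l : ℝ => ρ + l) 1 x := by
      simpa using (hasDerivAt_id x).const_add ρ
    have h3 := (h1.add h2).sub (hnum.div hden hx)
    rw [hψfun, (show HasDerivAt (fun lam : ℝ => σ ^ 2 / 2 * lam ^ 2 + μ * lam - a * lam / (ρ + lam)) _ x from h3).deriv]
    field_simp
    ring
  -- cubic equations at each root
  have hEβ : σ ^ 2 / 2 * β₀ ^ 3 + (σ ^ 2 / 2 * ρ + μ) * β₀ ^ 2
      + (μ * ρ - a - q) * β₀ - q * ρ = 0 := by
    have h := hrβ; rw [hψ] at h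
    field_simp at h
    linear_combination (1/2 : ℝ) * h
  have hEα : σ ^ 2 / 2 * α ^ 3 + (σ ^ 2 / 2 * ρ + μ) * α ^ 2
      + (μ * ρ - a - q) * α - q * ρ = 0 := by
    have h := hrα; rw [hψ] at h
    field_simp at h
    linear_combination (1/2 : ℝ) * h
  have hEΦ : σ ^ 2 / 2 * Φq ^ 3 + (σ ^ 2 / 2 * ρ + μ) * Φq ^ 2
      + (μ * ρ - a - q) * Φq - q * ρ = 0 := by
    have h := hrΦ; rw [hψ] at h
    field_simp at h
    linear_combination (1/2 : ℝ) * h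
  -- Vieta
  have d1 : σ ^ 2 / 2 * (α ^ 2 + α * β₀ + β₀ ^ 2) + (σ ^ 2 / 2 * ρ + μ) * (α + β₀)
      + (μ * ρ - a - q) = 0 := by
    apply mul_left_cancel₀ hβα
    linear_combination hEα - hEβ
  have d2 : σ ^ 2 / 2 * (Φq ^ 2 + Φq * α + α ^ 2) + (σ ^ 2 / 2 * ρ + μ) * (Φq + α)
      + (μ * ρ - a - q) = 0 := by
    apply mul_left_cancel₀ hαΦ
    linear_combination hEΦ - hEα
  have e1 : σ ^ 2 / 2 * (β₀ + α + Φq) + (σ ^ 2 / 2 * ρ + μ) = 0 := by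
    apply mul_left_cancel₀ hβΦ
    linear_combination d2 - d1
  have e2 : σ ^ 2 / 2 * (β₀ * α + β₀ * Φq + α * Φq) = μ * ρ - a - q := by
    linear_combination -d1 + (α + β₀) * e1
  have e3 : σ ^ 2 / 2 * (β₀ * α * Φq) = q * ρ := by
    linear_combination hEα - α ^ 2 * e1 + α * e2
  -- key polynomial identities
  have keyβ : (σ ^ 2 * β₀ + μ) * (ρ + β₀) ^ 2 - a * ρ
      = σ ^ 2 / 2 * ((β₀ - α) * (β₀ - Φq)) * (ρ + β₀) := by
    linear_combination -hEβ + (ρ + β₀) * (2 * β₀ * e1 - e2)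
  have keyα : (σ ^ 2 * α + μ) * (ρ + α) ^ 2 - a * ρ
      = σ ^ 2 / 2 * ((α - β₀) * (α - Φq)) * (ρ + α) := by
    linear_combination -hEα + (ρ + α) * (2 * α * e1 - e2)
  have keyΦ : (σ ^ 2 * Φq + μ) * (ρ + Φq) ^ 2 - a * ρ
      = σ ^ 2 / 2 * ((Φq - β₀) * (Φq - α)) * (ρ + Φq) := by
    linear_combination -hEΦ + (ρ + Φq) * (2 * Φq * e1 - e2)
  -- derivative value relation at each root
  have hDgen : ∀ x u v : ℝ, ρ + x ≠ 0 →
      ((σ ^ 2 * x + μ) * (ρ + x) ^ 2 - a * ρ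
        = σ ^ 2 / 2 * ((x - u) * (x - v)) * (ρ + x)) →
      deriv ψ x * (ρ + x) = σ ^ 2 / 2 * ((x - u) * (x - v)) := by
    intro x u v hx key
    rw [hder x hx]
    have expand : (σ ^ 2 * x + μ - a * ρ / (ρ + x) ^ 2) * (ρ + x)
        = ((σ ^ 2 * x + μ) * (ρ + x) ^ 2 - a * ρ) / (ρ + x) := by
      field_simp
    rw [expand, key, mul_div_cancel_right₀ _ hx]
  have hDβ := hDgen β₀ α Φq hβρ' keyβ
  have hDα := hDgen α β₀ Φq hαρ' keyα
  have hDΦ := hDgen Φq β₀ α hΦρ' keyΦ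
  -- express reciprocals
  have hpΦ : σ ^ 2 / 2 * ((Φq - β₀) * (Φq - α)) ≠ 0 := by
    rw [← hDΦ]; exact mul_ne_zero hdΦ hΦρ'
  have hpα : σ ^ 2 / 2 * ((α - β₀) * (α - Φq)) ≠ 0 := by
    rw [← hDα]; exact mul_ne_zero hdα hαρ'
  have hpβ : σ ^ 2 / 2 * ((β₀ - α) * (β₀ - Φq)) ≠ 0 := by
    rw [← hDβ]; exact mul_ne_zero hdβ hβρ'
  have h1 : 1 / (Φq * deriv ψ Φq)
      = (ρ + Φq) / (Φq * (σ ^ 2 / 2 * ((Φq - β₀) * (Φq - α)))) := by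
    rw [div_eq_div_iff (mul_ne_zero hΦ0 hdΦ) (mul_ne_zero hΦ0 hpΦ)]
    linear_combination -Φq * hDΦ
  have h2 : 1 / (α * deriv ψ α)
      = (ρ + α) / (α * (σ ^ 2 / 2 * ((α - β₀) * (α - Φq)))) := by
    rw [div_eq_div_iff (mul_ne_zero hα0' hdα) (mul_ne_zero hα0' hpα)]
    linear_combination -α * hDα
  have h3 : 1 / (β₀ * deriv ψ β₀)
      = (ρ + β₀) / (β₀ * (σ ^ 2 / 2 * ((β₀ - α) * (β₀ - Φq)))) := by
    rw [div_eq_div_iff (mul_ne_zero hβ0 hdβ) (mul_ne_zero hβ0 hpβ)]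
    linear_combination -β₀ * hDβ
  rw [h1, h2, h3]
  have hβα' : β₀ - α ≠ 0 := fun h => hβα (by linarith [sub_eq_zero.mp h])
  have hβΦ' : β₀ - Φq ≠ 0 := fun h => hβΦ (by linarith [sub_eq_zero.mp h])
  have hαΦ' : α - Φq ≠ 0 := fun h => hαΦ (by linarith [sub_eq_zero.mp h])
  have hprod : σ ^ 2 / 2 * (β₀ * α * Φq) ≠ 0 := by
    rw [e3]; positivity
  have hqe : 1 / q = ρ / (σ ^ 2 / 2 * (β₀ * α * Φq)) := by
    rw [div_eq_div_iff hq0 hprod]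
    linear_combination e3
  rw [hqe]
  have hσ2 : (σ ^ 2 / 2 : ℝ) ≠ 0 := by positivity
  field_simp
  ring
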